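/- arXiv:2004.13655 — 3 statements merged into one kernel-verified Lean document; each statement's English description precedes it below -/
import Mathlib

section
/- Let G be a preordered topological abelian group whose positive cone G₊ has an order unit u. Then the Dirac measure δ_u is power universal for the stochastic preorder on compactly supported finite Radon measures under convolution: whenever μ and ν are compactly supported finite Radon measures on G with μ ≤ ν in the stochastic preorder, there exists k ∈ ℕ such that ν ≤ δ_{k·u} ∗ μ in the stochastic preorder. -/
open MeasureTheory Filter

/-- The support of a measure: the set of points all of whose open neighbourhoods have
positive measure. -/
def msupport {X : Type*} [TopologicalSpace X] [MeasurableSpace X] (μ : Measure X) : Set X :=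
  {x | ∀ U : Set X, IsOpen U → x ∈ U → 0 < μ U}

/-- The stochastic preorder on measures of equal total mass, with respect to the positive
cone `P`: comparison on all closed upward closed sets. -/
def StochLE {G : Type*} [AddCommGroup G] [TopologicalSpace G] [MeasurableSpace G]
    (P : Set G) (μ ν : Measure G) : Prop :=
  μ Set.univ = ν Set.univ ∧
    ∀ C : Set G, IsClosed C → (∀ x ∈ C, ∀ g ∈ P, x + g ∈ C) → μ C ≤ ν C

/-- An inner regular measure gives zero mass to the complement of its support. -/
lemma measure_compl_msupport {X : Type*} [TopologicalSpace X] [MeasurableSpace X]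
    [OpensMeasurableSpace X] (μ : Measure X) (hR : μ.InnerRegular) :
    μ (msupport μ)ᶜ = 0 := by
  have h : ∀ x ∈ (msupport μ)ᶜ, ∃ U : Set X, IsOpen U ∧ x ∈ U ∧ μ U = 0 := by
    intro x hx
    simp only [msupport, Set.mem_compl_iff, Set.mem_setOf_eq] at hx
    push_neg at hx
    obtain ⟨U, hU, hxU, hμU⟩ := hx
    exact ⟨U, hU, hxU, le_antisymm hμU (zero_le)⟩
  choose! U hUopen hxU hU0 using h
  have hopen : IsOpen (msupport μ)ᶜ := by
    rw [isOpen_iff_forall_mem_open]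
    intro x hx
    refine ⟨U x, fun y hy hyS => ?_, hUopen x hx, hxU x hx⟩
    have := hyS (U x) (hUopen x hx) hy
    rw [hU0 x hx] at this
    exact lt_irrefl 0 this
  rw [hopen.measurableSet.measure_eq_iSup_isCompact]
  refine le_antisymm ?_ (zero_le)
  refine iSup_le fun K => iSup_le fun hKsub => iSup_le fun hK => ?_
  obtain ⟨t, ht⟩ := hK.elim_nhds_subcover' (fun x _ => U x)
    (fun x hx => (hUopen x (hKsub hx)).mem_nhds (hxU x (hKsub hx)))
  calc μ K ≤ μ (⋃ x ∈ t, U x.1) := measure_mono ht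
    _ ≤ ∑ x ∈ t, μ (U x.1) := measure_biUnion_finset_le _ _
    _ = 0 := Finset.sum_eq_zero fun x _ => hU0 x.1 (hKsub x.2)

/-- Natural multiples of elements of the cone stay in the cone. -/
lemma nsmul_mem_cone {G : Type*} [AddCommGroup G] (P : Set G)
    (hPadd : ∀ x ∈ P, ∀ y ∈ P, x + y ∈ P) (hP0 : (0 : G) ∈ P)
    {u : G} (huP : u ∈ P) : ∀ n : ℕ, n • u ∈ P := by
  intro n
  induction n with
  | zero => simpa using hP0
  | succ n ih => rw [succ_nsmul]; exact hPadd _ ih _ huP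

/-- Uniform archimedean property on a compact set. -/
lemma uniform_arch {G : Type*} [AddCommGroup G] [TopologicalSpace G] [IsTopologicalAddGroup G]
    (P : Set G) (hPadd : ∀ x ∈ P, ∀ y ∈ P, x + y ∈ P) (hP0 : (0 : G) ∈ P)
    (u : G) (huP : u ∈ P)
    (harch : ∀ x : G, ∃ k : ℕ, k • u - x ∈ P)
    (hnbhd : {x : G | x + u ∈ P ∧ u - x ∈ P} ∈ nhds (0 : G))
    {D : Set G} (hD : IsCompact D) :
    ∃ k : ℕ, ∀ d ∈ D, k • u - d ∈ P := by
  set V : Set G := {x : G | x + u ∈ P ∧ u - x ∈ P} with hV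
  have key : ∀ d : G, {x : G | x - d ∈ V} ∈ nhds d := by
    intro d
    have hcont : Continuous fun x : G => x - d := continuous_id.sub continuous_const
    have h := hcont.tendsto' d 0 (by simp)
    exact h hnbhd
  obtain ⟨t, hcov⟩ := hD.elim_nhds_subcover' (fun d _ => {x : G | x - d ∈ V})
    (fun d _ => key d)
  set f : G → ℕ := fun d => Classical.choose (harch d) with hf
  refine ⟨t.sup (fun d => f d.1) + 1, fun d hd => ?_⟩
  obtain ⟨e, he, hde⟩ := Set.mem_iUnion₂.1 (hcov hd)
  have hdeV : d - e.1 ∈ V := hde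
  have hfe : (f e.1) • u - e.1 ∈ P := Classical.choose_spec (harch e.1)
  set k := t.sup (fun d => f d.1) + 1 with hk
  have hle : f e.1 + 1 ≤ k := by
    rw [hk]
    exact Nat.succ_le_succ (Finset.le_sup (f := fun d => f d.1) he)
  have hksplit : k = (k - (f e.1 + 1)) + 1 + f e.1 := by omega
  have h1 : (k - (f e.1 + 1)) • u ∈ P := nsmul_mem_cone P hPadd hP0 huP _
  have h2 : u - (d - e.1) ∈ P := hdeV.2
  have hsum : (k - (f e.1 + 1)) • u + (u - (d - e.1)) + ((f e.1) • u - e.1) ∈ P :=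
    hPadd _ (hPadd _ h1 _ h2) _ hfe
  have heq : k • u - d = (k - (f e.1 + 1)) • u + (u - (d - e.1)) + ((f e.1) • u - e.1) := by
    nth_rewrite 1 [hksplit]
    rw [add_nsmul, add_nsmul, one_nsmul]
    abel
  rw [heq]
  exact hsum

/-- Convolution with a Dirac measure is translation. -/
lemma dirac_conv_eq_map {G : Type*} [AddCommGroup G] [TopologicalSpace G]
    [IsTopologicalAddGroup G] [T2Space G] [MeasurableSpace G] [BorelSpace G]
    (a : G) (μ : Measure G) [SFinite μ] :
    (Measure.dirac a).conv μ = μ.map (fun x => a + x) := by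
  have hAE : AEMeasurable (fun p : G × G => p.1 + p.2) (μ.map (Prod.mk a)) := by
    refine ⟨fun p : G × G => a + p.2, measurable_snd.const_add a, ?_⟩
    have hms : MeasurableSet {p : G × G | p.1 ≠ a} :=
      (isClosed_singleton.measurableSet.compl).preimage measurable_fst
    have hnull : (μ.map (Prod.mk a)) {p : G × G | p.1 ≠ a} = 0 := by
      rw [Measure.map_apply measurable_prodMk_left hms]
      convert measure_empty (μ := μ)
      ext x
      simp
    refine measure_mono_null ?_ hnull
    intro p hp
    simp only [Set.mem_compl_iff, Set.mem_setOf_eq, not_not] at hp ⊢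
    intro h; exact hp (by rw [h])
  rw [Measure.conv, Measure.dirac_prod,
    hAE.map_map_of_aemeasurable measurable_prodMk_left.aemeasurable]
  rfl

/-- The Dirac measure at an order unit `u` is power universal for the stochastic preorder on
compactly supported finite Radon measures under convolution: if `μ ≤ ν` stochastically, then
`ν ≤ δ_{k • u} ∗ μ` for some `k ∈ ℕ`. -/
theorem dirac_orderUnit_power_universal
    {G : Type*} [AddCommGroup G] [TopologicalSpace G] [IsTopologicalAddGroup G] [T2Space G]
    [MeasurableSpace G] [BorelSpace G]
    (P : Set G) (hPclosed : IsClosed P) (hPadd : ∀ x ∈ P, ∀ y ∈ P, x + y ∈ P)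
    (hP0 : (0 : G) ∈ P)
    (u : G) (huP : u ∈ P)
    (harch : ∀ x : G, ∃ k : ℕ, k • u - x ∈ P)
    (hnbhd : {x : G | x + u ∈ P ∧ u - x ∈ P} ∈ nhds (0 : G))
    (μ ν : Measure G) [IsFiniteMeasure μ] [IsFiniteMeasure ν]
    (hμR : μ.InnerRegular) (hνR : ν.InnerRegular)
    (hμc : IsCompact (msupport μ)) (hνc : IsCompact (msupport ν))
    (hle : StochLE P μ ν) :
    ∃ k : ℕ, StochLE P ν ((Measure.dirac (k • u)).conv μ) := by
  have hD : IsCompact ((fun p : G × G => p.1 - p.2) '' (msupport ν ×ˢ msupport μ)) :=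
    (hνc.prod hμc).image (continuous_fst.sub continuous_snd)
  obtain ⟨k, hk⟩ := uniform_arch P hPadd hP0 u huP harch hnbhd hD
  have hconv : (Measure.dirac (k • u)).conv μ = μ.map (fun x => k • u + x) :=
    dirac_conv_eq_map _ μ
  have hmeas : Measurable fun x : G => k • u + x :=
    (continuous_const.add continuous_id).measurable
  refine ⟨k, ?_, ?_⟩
  · rw [hconv, Measure.map_apply hmeas MeasurableSet.univ]
    simp [hle.1]
  · intro C hC hCup
    rw [hconv, Measure.map_apply hmeas hC.measurableSet]
    by_cases hmeet : (C ∩ msupport ν).Nonempty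
    · obtain ⟨a, haC, haS⟩ := hmeet
      have hsub : msupport μ ⊆ (fun x => k • u + x) ⁻¹' C := by
        intro b hb
        have hmem : k • u - (a - b) ∈ P :=
          hk _ ⟨(a, b), Set.mk_mem_prod haS hb, rfl⟩
        have hin : a + (k • u - (a - b)) ∈ C := hCup a haC _ hmem
        simpa [Set.mem_preimage, show a + (k • u - (a - b)) = k • u + b by abel] using hin
      calc ν C ≤ ν Set.univ := measure_mono (Set.subset_univ _)
        _ = μ Set.univ := hle.1.symm
        _ = μ (msupport μ ∪ (msupport μ)ᶜ) := by rw [Set.union_compl_self]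
        _ ≤ μ (msupport μ) + μ (msupport μ)ᶜ := measure_union_le _ _
        _ = μ (msupport μ) := by rw [measure_compl_msupport μ hμR, add_zero]
        _ ≤ μ ((fun x => k • u + x) ⁻¹' C) := measure_mono hsub
    · have hsub : C ⊆ (msupport ν)ᶜ := fun x hx hxS => hmeet ⟨x, hx, hxS⟩
      calc ν C ≤ ν (msupport ν)ᶜ := measure_mono hsub
        _ = 0 := measure_compl_msupport ν hνR
        _ ≤ _ := zero_le
end

section
/- Let G be a preordered topological abelian group whose positive cone G₊ has an order unit u, and let μ be a compactly supported finite Radon measure on G. Then there exists a finitely supported measure σ on G (a finite nonnegative linear combination of Dirac measures) with σ(G) = μ(G) such that μ ∗ δ_{−2u} ≤ σ and σ ≤ μ ∗ δ_{2u} in the stochastic preorder. -/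
open MeasureTheory Filter

lemma conv_dirac_eq_map {G : Type*} [AddCommGroup G] [TopologicalSpace G]
    [IsTopologicalAddGroup G] [T2Space G] [MeasurableSpace G] [BorelSpace G]
    (μ : Measure G) [SFinite μ] (c : G) :
    μ.conv (Measure.dirac c) = μ.map (· + c) := by
  have hg : Measurable (fun x : G => (x, c)) := measurable_prodMk_right
  have hnull : (μ.map (fun x : G => (x, c))) {p : G × G | p.2 ≠ c} = 0 := by
    have hc : MeasurableSet ({c} : Set G) := isClosed_singleton.measurableSet
    have hm : MeasurableSet {p : G × G | p.2 ≠ c} := (measurable_snd hc).compl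
    rw [Measure.map_apply hg hm,
      show (fun x : G => (x, c)) ⁻¹' {p : G × G | p.2 ≠ c} = ∅ from by ext x; simp,
      measure_empty]
  have hae : (fun p : G × G => p.1 + p.2) =ᵐ[μ.map (fun x : G => (x, c))]
      (fun p : G × G => p.1 + c) := by
    rw [Filter.EventuallyEq, ae_iff]
    refine measure_mono_null (fun p hp => ?_) hnull
    simp only [Set.mem_setOf_eq] at hp ⊢
    intro h
    exact hp (by rw [h])
  have hm2 : Measurable (fun p : G × G => p.1 + c) :=
    ((continuous_add_right c).measurable).comp measurable_fst
  unfold Measure.conv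
  rw [Measure.prod_dirac, Measure.map_congr hae, Measure.map_map hm2 hg]
  rfl

/-- Finite approximation: for a compactly supported finite Radon measure `μ` on a preordered
topological abelian group with order unit `u`, the order interval
`[μ ∗ δ_{-2u}, μ ∗ δ_{2u}]` for the stochastic preorder contains a finitely supported measure
of the same total mass. -/
theorem finitely_supported_in_order_interval
    {G : Type*} [AddCommGroup G] [TopologicalSpace G] [IsTopologicalAddGroup G] [T2Space G]
    [MeasurableSpace G] [BorelSpace G]
    (P : Set G) (hPclosed : IsClosed P) (hPadd : ∀ x ∈ P, ∀ y ∈ P, x + y ∈ P)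
    (hP0 : (0 : G) ∈ P)
    (u : G) (huP : u ∈ P)
    (harch : ∀ x : G, ∃ k : ℕ, k • u - x ∈ P)
    (hnbhd : {x : G | x + u ∈ P ∧ u - x ∈ P} ∈ nhds (0 : G))
    (μ : Measure G) [IsFiniteMeasure μ] (hμR : μ.InnerRegular)
    (hμc : IsCompact (msupport μ)) :
    ∃ σ : Measure G,
      (∃ (s : Finset G) (w : G → NNReal),
          σ = ∑ x ∈ s, ((w x : ENNReal) • Measure.dirac x)) ∧
      σ Set.univ = μ Set.univ ∧
      StochLE P (μ.conv (Measure.dirac (-((2 : ℕ) • u)))) σ ∧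
      StochLE P σ (μ.conv (Measure.dirac ((2 : ℕ) • u))) := by
  classical
  set K := msupport μ with hK
  set V : Set G := {x : G | x + u ∈ P ∧ u - x ∈ P} with hV
  have hVclosed : IsClosed V := by
    have h1 : IsClosed {x : G | x + u ∈ P} :=
      hPclosed.preimage (continuous_id.add continuous_const)
    have h2 : IsClosed {x : G | u - x ∈ P} :=
      hPclosed.preimage (continuous_const.sub continuous_id)
    exact h1.inter h2
  -- `Kᶜ` is null
  have hKnull : μ Kᶜ = 0 := by
    by_contra h
    have hpos : 0 < μ Kᶜ := pos_iff_ne_zero.mpr h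
    obtain ⟨L, hLsub, hLcmp, hLpos⟩ :=
      hμR.innerRegular (hμc.isClosed.measurableSet.compl) 0 hpos
    have hex : ∀ z ∈ L, ∃ O : Set G, IsOpen O ∧ z ∈ O ∧ μ O = 0 := by
      intro z hz
      have hzK : z ∉ K := hLsub hz
      simp only [hK, msupport, Set.mem_setOf_eq, not_forall] at hzK
      obtain ⟨O, hOopen, hzO, hO⟩ := hzK
      exact ⟨O, hOopen, hzO, le_antisymm (not_lt.mp hO) zero_le⟩
    choose O hOopen hzO hOnull using hex
    obtain ⟨t, ht⟩ := hLcmp.elim_nhds_subcover' O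
      (fun z hz => (hOopen z hz).mem_nhds (hzO z hz))
    have : μ L ≤ ∑ z ∈ t, μ (O z z.2) :=
      (measure_mono ht).trans (measure_biUnion_finset_le t _)
    simp only [hOnull, Finset.sum_const_zero] at this
    exact absurd (le_zero_iff.mp this) hLpos.ne'
  -- cover the support by finitely many translates of `V`
  have hUnhds : ∀ x : G, {y : G | y - x ∈ V} ∈ nhds x := by
    intro x
    have hc : Continuous (fun y : G => y - x) := continuous_id.sub continuous_const
    have : V ∈ nhds ((fun y : G => y - x) x) := by simpa using hnbhd
    exact hc.continuousAt.preimage_mem_nhds this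
  obtain ⟨t, -, hcover⟩ := hμc.elim_nhds_subcover (fun x => {y : G | y - x ∈ V})
    (fun x _ => hUnhds x)
  set l : List G := t.toList with hl
  set n : ℕ := l.length with hn
  set x_ : ℕ → G := fun i => l.getD i 0 with hx_
  have hxmem : ∀ x ∈ t, ∃ i, i < n ∧ x_ i = x := by
    intro x hx
    have : x ∈ l := by simpa [hl] using hx
    obtain ⟨i, hi, hxi⟩ := List.mem_iff_getElem.mp this
    refine ⟨i, hi, ?_⟩
    show l.getD i 0 = x
    rw [List.getD_eq_getElem l 0 hi]; exact hxi
  have hxinj : ∀ i < n, ∀ j < n, x_ i = x_ j → i = j := by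
    intro i hi j hj hij
    have hnd : l.Nodup := Finset.nodup_toList t
    have : l[i]'hi = l[j]'hj := by
      rw [← List.getD_eq_getElem l 0 hi, ← List.getD_eq_getElem l 0 hj]; exact hij
    exact (hnd.getElem_inj_iff.mp this)
  set f : ℕ → Set G := fun i => if i < n then {y : G | y - x_ i ∈ V} ∩ K else ∅ with hf
  have hfm : ∀ i, MeasurableSet (f i) := by
    intro i
    simp only [hf]
    split
    · exact ((hVclosed.preimage (continuous_id.sub continuous_const)).inter
        hμc.isClosed).measurableSet
    · exact MeasurableSet.empty
  set A : ℕ → Set G := disjointed f with hA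
  have hAm : ∀ i, MeasurableSet (A i) := MeasurableSet.disjointed hfm
  have hAsub : ∀ i, A i ⊆ f i := disjointed_subset f
  have hAdisj : Pairwise (Function.onFun Disjoint A) := disjoint_disjointed f
  have hKsub : K ⊆ ⋃ i ∈ Finset.range n, A i := by
    intro y hy
    have hyf : y ∈ ⋃ i, f i := by
      obtain ⟨x, hx, hyx⟩ := Set.mem_iUnion₂.mp (hcover hy)
      obtain ⟨i, hi, rfl⟩ := hxmem x hx
      exact Set.mem_iUnion.mpr ⟨i, by simp [hf, hi, hyx, hy]⟩
    rw [← iUnion_disjointed] at hyf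
    obtain ⟨i, hiA⟩ := Set.mem_iUnion.mp hyf
    have hi : i < n := by
      by_contra h
      have : A i ⊆ ∅ := by simpa [hf, h] using hAsub i
      exact this hiA
    exact Set.mem_biUnion (Finset.mem_range.mpr hi) hiA
  -- full measure of the pieces
  have hfull : ∀ S : Set G, μ S = μ (S ∩ ⋃ i ∈ Finset.range n, A i) := by
    intro S
    refine (measure_inter_conull ?_).symm
    exact measure_mono_null (Set.compl_subset_compl.mpr hKsub) hKnull
  -- the finitely supported measure
  set s : Finset G := (Finset.range n).image (fun i => x_ i + u) with hs
  set w : G → NNReal :=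
    fun z => ∑ i ∈ Finset.range n, if x_ i + u = z then (μ (A i)).toNNReal else 0 with hw
  set σ : Measure G := ∑ x ∈ s, ((w x : ENNReal) • Measure.dirac x) with hσdef
  have hginj : ∀ i ∈ Finset.range n, ∀ j ∈ Finset.range n,
      x_ i + u = x_ j + u → i = j := by
    intro i hi j hj hij
    exact hxinj i (Finset.mem_range.mp hi) j (Finset.mem_range.mp hj)
      (by simpa using hij)
  have hσ : σ = ∑ i ∈ Finset.range n, μ (A i) • Measure.dirac (x_ i + u) := by
    rw [hσdef, hs, Finset.sum_image hginj]
    refine Finset.sum_congr rfl fun i hi => ?_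
    have hwi : w (x_ i + u) = (μ (A i)).toNNReal := by
      show (∑ j ∈ Finset.range n, if x_ j + u = x_ i + u then (μ (A j)).toNNReal else 0)
          = (μ (A i)).toNNReal
      have hstep : (∑ j ∈ Finset.range n, if x_ j + u = x_ i + u then (μ (A j)).toNNReal else 0)
          = ∑ j ∈ Finset.range n, if j = i then (μ (A j)).toNNReal else 0 := by
        refine Finset.sum_congr rfl fun j hj => ?_
        by_cases h : j = i
        · simp [h]
        · have hne : x_ j + u ≠ x_ i + u := fun hc => h (hginj j hj i hi hc)
          simp [h, hne]
      rw [hstep, Finset.sum_ite_eq' (Finset.range n) i (fun j => (μ (A j)).toNNReal), if_pos hi]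
    rw [hwi, ENNReal.coe_toNNReal (measure_ne_top μ _)]
  have hσapp : ∀ C : Set G, MeasurableSet C →
      σ C = ∑ i ∈ Finset.range n, if x_ i + u ∈ C then μ (A i) else 0 := by
    intro C hC
    rw [hσ]
    rw [Measure.finset_sum_apply]
    refine Finset.sum_congr rfl fun i _ => ?_
    rw [Measure.smul_apply, Measure.dirac_apply' _ hC]
    by_cases h : x_ i + u ∈ C <;> simp [h, Set.indicator_apply]
  have hconv : ∀ (c : G) (S : Set G), MeasurableSet S →
      (μ.conv (Measure.dirac c)) S = μ ((· + c) ⁻¹' S) := by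
    intro c S hS
    rw [conv_dirac_eq_map, Measure.map_apply (continuous_add_right c).measurable hS]
  have h2u : (2 : ℕ) • u ∈ P := by
    rw [two_nsmul]; exact hPadd u huP u huP
  -- total mass of σ
  have hσuniv : σ Set.univ = μ Set.univ := by
    rw [hσapp Set.univ MeasurableSet.univ]
    simp only [Set.mem_univ, if_true]
    have hsum : (∑ i ∈ Finset.range n, μ (A i)) = μ (⋃ i ∈ Finset.range n, A i) :=
      (measure_biUnion_finset (fun i _ j _ hij => hAdisj hij) (fun i _ => hAm i)).symm
    have h2 := hfull Set.univ
    rw [Set.univ_inter] at h2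
    rw [hsum, ← h2]
  refine ⟨σ, ⟨s, w, hσdef⟩, hσuniv, ⟨?_, ?_⟩, ⟨?_, ?_⟩⟩
  · -- masses equal, first
    rw [hconv _ _ MeasurableSet.univ, Set.preimage_univ, hσuniv]
  · -- μ ∗ δ_{-2u} ≤ σ on upward closed sets
    intro C hCcl hCup
    have hCm : MeasurableSet C := hCcl.measurableSet
    rw [hconv _ _ hCm, hσapp C hCm]
    set S : Set G := (· + -((2 : ℕ) • u)) ⁻¹' C with hS
    rw [hfull S]
    have hsub : S ∩ ⋃ i ∈ Finset.range n, A i ⊆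
        ⋃ i ∈ (Finset.range n).filter (fun i => x_ i + u ∈ C), A i := by
      rintro y ⟨hyS, hyA⟩
      obtain ⟨i, hi, hyAi⟩ := Set.mem_iUnion₂.mp hyA
      have hin : i < n := Finset.mem_range.mp hi
      have hyf : y ∈ f i := hAsub i hyAi
      simp only [hf, if_pos hin] at hyf
      obtain ⟨hyV, -⟩ := hyf
      obtain ⟨h1, h2⟩ := hyV
      have hg : (u - (y - x_ i)) + (2 : ℕ) • u ∈ P := hPadd _ h2 _ h2u
      have hmem : (y + -((2 : ℕ) • u)) + ((u - (y - x_ i)) + (2 : ℕ) • u) ∈ C :=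
        hCup _ hyS _ hg
      have heq : (y + -((2 : ℕ) • u)) + ((u - (y - x_ i)) + (2 : ℕ) • u) = x_ i + u := by
        abel
      rw [heq] at hmem
      exact Set.mem_biUnion (Finset.mem_filter.mpr ⟨hi, hmem⟩) hyAi
    calc μ (S ∩ ⋃ i ∈ Finset.range n, A i)
        ≤ μ (⋃ i ∈ (Finset.range n).filter (fun i => x_ i + u ∈ C), A i) :=
          measure_mono hsub
      _ ≤ ∑ i ∈ (Finset.range n).filter (fun i => x_ i + u ∈ C), μ (A i) :=
          measure_biUnion_finset_le _ _
      _ = ∑ i ∈ Finset.range n, if x_ i + u ∈ C then μ (A i) else 0 :=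
          Finset.sum_filter _ _
  · rw [hconv _ _ MeasurableSet.univ, Set.preimage_univ, hσuniv]
  · -- σ ≤ μ ∗ δ_{2u} on upward closed sets
    intro C hCcl hCup
    have hCm : MeasurableSet C := hCcl.measurableSet
    rw [hconv _ _ hCm, hσapp C hCm]
    rw [← Finset.sum_filter]
    rw [← measure_biUnion_finset
      (fun i _ j _ hij => hAdisj hij) (fun i _ => hAm i)]
    refine measure_mono ?_
    intro y hy
    obtain ⟨i, hi, hyAi⟩ := Set.mem_iUnion₂.mp hy
    obtain ⟨hirange, hiC⟩ := Finset.mem_filter.mp hi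
    have hin : i < n := Finset.mem_range.mp hirange
    have hyf : y ∈ f i := hAsub i hyAi
    simp only [hf, if_pos hin] at hyf
    obtain ⟨⟨h1, h2⟩, -⟩ := hyf
    have hmem : (x_ i + u) + ((y - x_ i) + u) ∈ C := hCup _ hiC _ h1
    have heq : (x_ i + u) + ((y - x_ i) + u) = y + (2 : ℕ) • u := by
      rw [two_nsmul]; abel
    rw [heq] at hmem
    exact hmem
end

section
/- Let G be a preordered topological abelian group whose positive cone G₊ has an order unit u. Then every monotone additive map t : G → ℝ (i.e. t(x + y) = t(x) + t(y) for all x, y, and t(x) ≤ t(y) whenever x ≤ y) is continuous. -/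
open Filter

/-- On a preordered topological abelian group whose positive cone `P` has an order unit `u`,
every monotone additive real-valued map is continuous. -/
theorem monotone_additive_continuous
    {G : Type*} [AddCommGroup G] [TopologicalSpace G] [IsTopologicalAddGroup G] [T2Space G]
    (P : Set G) (hPclosed : IsClosed P) (hPadd : ∀ x ∈ P, ∀ y ∈ P, x + y ∈ P)
    (hP0 : (0 : G) ∈ P)
    (u : G) (huP : u ∈ P)
    (harch : ∀ x : G, ∃ k : ℕ, k • u - x ∈ P)
    (hnbhd : {x : G | x + u ∈ P ∧ u - x ∈ P} ∈ nhds (0 : G))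
    (t : G → ℝ)
    (htadd : ∀ x y : G, t (x + y) = t x + t y)
    (htmono : ∀ x y : G, y - x ∈ P → t x ≤ t y) :
    Continuous t := by
  set φ : G →+ ℝ := AddMonoidHom.mk' t htadd with hφ
  have ht0 : t 0 = 0 := φ.map_zero
  have htu : 0 ≤ t u := by
    have := htmono 0 u (by simpa using huP)
    simpa [ht0] using this
  have hcont0 : ContinuousAt t 0 := by
    rw [ContinuousAt, ht0, Metric.tendsto_nhds]
    intro ε hε
    obtain ⟨n, hn⟩ := exists_nat_gt (t u / ε)
    have hn0 : 0 < (n : ℝ) := lt_of_le_of_lt (div_nonneg htu hε.le) hn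
    have htu_lt : t u < n * ε := (div_lt_iff₀ hε).mp hn
    have hV : (fun x : G => n • x) ⁻¹' {x : G | x + u ∈ P ∧ u - x ∈ P} ∈ nhds (0 : G) := by
      have hc : Continuous (fun x : G => n • x) := continuous_nsmul n
      have := hc.continuousAt (x := (0 : G))
      rw [ContinuousAt, smul_zero] at this
      exact this hnbhd
    filter_upwards [hV] with x hx
    obtain ⟨h1, h2⟩ := hx
    have hmul : t (n • x) = n * t x := by
      have h := φ.map_nsmul n x
      rw [nsmul_eq_mul] at h
      exact h
    have hle1 : n * t x ≤ t u := by
      have := htmono (n • x) u h2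
      rwa [hmul] at this
    have hle2 : -(t u) ≤ n * t x := by
      have hP' : n • x - (-u) ∈ P := by simpa [sub_neg_eq_add] using h1
      have := htmono (-u) (n • x) hP'
      rw [hmul] at this
      have hneg : t (-u) = -(t u) := φ.map_neg u
      linarith [this, hneg ▸ this]
    have habs : |n * t x| ≤ t u := abs_le.mpr ⟨hle2, hle1⟩
    have : (n : ℝ) * |t x| ≤ t u := by
      rwa [abs_mul, abs_of_pos hn0] at habs
    have : |t x| < ε := by
      by_contra h
      push_neg at h
      nlinarith
    simpa [Real.dist_eq, ht0] using this
  exact continuous_of_continuousAt_zero φ hcont0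
end
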